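/- (Vanishing of successive differences.) Under the algorithm setup with Assumption 1 and Condition (C1): lim_{n→∞} ‖H_{n+1} − H_n‖_F = 0 and lim_{n→∞} ‖W_{n+1} − W_n‖_F = 0. -/
import Mathlib


open Matrix Filter

/-- Frobenius norm of a real matrix. -/
noncomputable def frob {m n : Type*} [Fintype m] [Fintype n] (X : Matrix m n ℝ) : ℝ :=
  Real.sqrt (∑ i, ∑ j, (X i j) ^ 2)

/-- Frobenius inner product of two real matrices. -/
noncomputable def fip {m n : Type*} [Fintype m] [Fintype n] (X Y : Matrix m n ℝ) : ℝ :=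
  ∑ i, ∑ j, X i j * Y i j

/-- Entrywise projection onto the nonnegative orthant. -/
def pplus {m n : Type*} (X : Matrix m n ℝ) : Matrix m n ℝ :=
  Matrix.of fun i j => max (X i j) 0

/-- Entrywise nonnegativity of a matrix. -/
def matNonneg {m n : Type*} (X : Matrix m n ℝ) : Prop := ∀ i j, 0 ≤ X i j

section basic
variable {m n p q : Type*} [Fintype m] [Fintype n] [Fintype p] [Fintype q]

lemma fip_comm (X Y : Matrix m n ℝ) : fip X Y = fip Y X := by
  simp [fip, mul_comm]

lemma frob_eq_sqrt_fip (X : Matrix m n ℝ) : frob X = Real.sqrt (fip X X) := by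
  simp [frob, fip, sq]

lemma fip_self_nonneg (X : Matrix m n ℝ) : 0 ≤ fip X X := by
  apply Finset.sum_nonneg; intro i _; apply Finset.sum_nonneg; intro j _; exact mul_self_nonneg _

lemma frob_nonneg (X : Matrix m n ℝ) : 0 ≤ frob X := Real.sqrt_nonneg _

lemma frob_sq (X : Matrix m n ℝ) : frob X ^ 2 = fip X X := by
  rw [frob_eq_sqrt_fip, Real.sq_sqrt (fip_self_nonneg X)]

lemma fip_eq_trace (X Y : Matrix m n ℝ) : fip X Y = Matrix.trace (Xᵀ * Y) := by
  simp [fip, Matrix.trace, Matrix.diag, Matrix.mul_apply, Matrix.transpose_apply]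
  rw [Finset.sum_comm]

lemma fip_add_left (X Y Z : Matrix m n ℝ) : fip (X + Y) Z = fip X Z + fip Y Z := by
  simp [fip, add_mul, Finset.sum_add_distrib]

lemma fip_smul_left (c : ℝ) (X Z : Matrix m n ℝ) : fip (c • X) Z = c * fip X Z := by
  simp [fip, Finset.mul_sum, mul_assoc]

lemma fip_neg_left (X Z : Matrix m n ℝ) : fip (-X) Z = - fip X Z := by
  simp [fip, Finset.sum_neg_distrib]

lemma fip_sub_left (X Y Z : Matrix m n ℝ) : fip (X - Y) Z = fip X Z - fip Y Z := by
  rw [sub_eq_add_neg, fip_add_left, fip_neg_left, sub_eq_add_neg]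

lemma fip_add_right (X Y Z : Matrix m n ℝ) : fip Z (X + Y) = fip Z X + fip Z Y := by
  rw [fip_comm, fip_add_left, fip_comm X Z, fip_comm Y Z]

lemma fip_smul_right (c : ℝ) (X Z : Matrix m n ℝ) : fip Z (c • X) = c * fip Z X := by
  rw [fip_comm, fip_smul_left, fip_comm]

lemma fip_sub_right (X Y Z : Matrix m n ℝ) : fip Z (X - Y) = fip Z X - fip Z Y := by
  rw [fip_comm, fip_sub_left, fip_comm X Z, fip_comm Y Z]

lemma fip_self_eq_zero (X : Matrix m n ℝ) (h : fip X X = 0) : X = 0 := by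
  ext i j
  have h1 : ∀ i ∈ Finset.univ, (0:ℝ) ≤ ∑ j, X i j * X i j := by
    intro i _; exact Finset.sum_nonneg fun j _ => mul_self_nonneg _
  have h2 := (Finset.sum_eq_zero_iff_of_nonneg h1).mp h i (Finset.mem_univ i)
  have h3 : ∀ j ∈ Finset.univ, (0:ℝ) ≤ X i j * X i j := fun j _ => mul_self_nonneg _
  have := (Finset.sum_eq_zero_iff_of_nonneg h3).mp h2 j (Finset.mem_univ j)
  simpa [mul_self_eq_zero] using this

lemma frob_eq_zero {X : Matrix m n ℝ} (h : frob X = 0) : X = 0 := by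
  apply fip_self_eq_zero
  have h2 := frob_sq X
  rw [h] at h2; simpa using h2.symm

lemma fip_sq_le (X Y : Matrix m n ℝ) : fip X Y ^ 2 ≤ fip X X * fip Y Y := by
  have h := Finset.sum_mul_sq_le_sq_mul_sq (Finset.univ (α := m × n))
    (fun r => X r.1 r.2) (fun r => Y r.1 r.2)
  simpa [fip, Fintype.sum_prod_type, sq] using h

lemma fip_le_frob_mul_frob (X Y : Matrix m n ℝ) : fip X Y ≤ frob X * frob Y := by
  have h := fip_sq_le X Y
  have h2 : fip X Y ≤ |fip X Y| := le_abs_self _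
  have h3 : |fip X Y| = Real.sqrt (fip X Y ^ 2) := (Real.sqrt_sq_eq_abs _).symm
  rw [frob_eq_sqrt_fip, frob_eq_sqrt_fip, ← Real.sqrt_mul (fip_self_nonneg X)]
  calc fip X Y ≤ Real.sqrt (fip X Y ^ 2) := by rw [← h3]; exact h2
    _ ≤ _ := Real.sqrt_le_sqrt h

lemma frob_mono {X Y : Matrix m n ℝ} (h : fip X X ≤ fip Y Y) : frob X ≤ frob Y := by
  rw [frob_eq_sqrt_fip, frob_eq_sqrt_fip]; exact Real.sqrt_le_sqrt h

lemma frob_smul (c : ℝ) (X : Matrix m n ℝ) : frob (c • X) = |c| * frob X := by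
  rw [frob_eq_sqrt_fip, frob_eq_sqrt_fip, fip_smul_left, fip_smul_right, ← mul_assoc,
    Real.sqrt_mul (mul_self_nonneg c)]
  congr 1
  rw [← Real.sqrt_mul_self (abs_nonneg c), abs_mul_abs_self]

lemma frob_transpose (X : Matrix m n ℝ) : frob Xᵀ = frob X := by
  rw [frob, frob, Finset.sum_comm]
  simp [Matrix.transpose_apply]

lemma frob_mul_le (A : Matrix m n ℝ) (B : Matrix n p ℝ) : frob (A * B) ≤ frob A * frob B := by
  rw [frob_eq_sqrt_fip, frob_eq_sqrt_fip, frob_eq_sqrt_fip,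
    ← Real.sqrt_mul (fip_self_nonneg A)]
  apply Real.sqrt_le_sqrt
  have key : ∀ i j, (A * B) i j * (A * B) i j ≤ (∑ k, A i k * A i k) * (∑ k, B k j * B k j) := by
    intro i j
    have h := Finset.sum_mul_sq_le_sq_mul_sq (Finset.univ (α := n))
      (fun k => A i k) (fun k => B k j)
    simpa [Matrix.mul_apply, sq] using h
  calc fip (A * B) (A * B) ≤ ∑ i, ∑ j, (∑ k, A i k * A i k) * (∑ k, B k j * B k j) := by
        apply Finset.sum_le_sum; intro i _; apply Finset.sum_le_sum; intro j _; exact key i j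
    _ = fip A A * fip B B := by
        rw [fip, fip, Finset.sum_mul]
        apply Finset.sum_congr rfl; intro i _
        rw [← Finset.mul_sum]
        congr 1
        rw [Finset.sum_comm]
    _ = _ := rfl

lemma fip_mul_adjoint (Wm : Matrix m p ℝ) (U : Matrix m n ℝ) (Z : Matrix p n ℝ) :
    fip (Wmᵀ * U) Z = fip U (Wm * Z) := by
  rw [fip_eq_trace, fip_eq_trace, Matrix.transpose_mul, Matrix.transpose_transpose,
    Matrix.mul_assoc]

lemma frob_aat (B : Matrix m n ℝ) : frob (Bᵀ * B) = frob (B * Bᵀ) := by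
  have h : fip (Bᵀ * B) (Bᵀ * B) = fip (B * Bᵀ) (B * Bᵀ) := by
    rw [fip_eq_trace, fip_eq_trace]
    simp only [Matrix.transpose_mul, Matrix.transpose_transpose]
    rw [Matrix.mul_assoc, Matrix.trace_mul_comm Bᵀ (B * (Bᵀ * B))]
    simp only [Matrix.mul_assoc]
  rw [frob_eq_sqrt_fip, frob_eq_sqrt_fip, h]

lemma pplus_nonexpansive (X Y : Matrix m n ℝ) : frob (pplus X - pplus Y) ≤ frob (X - Y) := by
  apply frob_mono
  rw [fip, fip]
  apply Finset.sum_le_sum; intro i _; apply Finset.sum_le_sum; intro j _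
  have h : |max (X i j) 0 - max (Y i j) 0| ≤ |X i j - Y i j| := abs_max_sub_max_le_abs _ _ _
  have h2 := mul_self_le_mul_self (abs_nonneg _) h
  simpa [pplus, Matrix.sub_apply, abs_mul_abs_self] using h2

end basic

section grad
variable {m n p : Type*} [Fintype m] [Fintype n] [Fintype p]

lemma frob_neg (X : Matrix m n ℝ) : frob (-X) = frob X := by
  have h := frob_smul (-1 : ℝ) X
  simpa using h

lemma key_bound (Wm : Matrix m p ℝ) (Z : Matrix p n ℝ) :
    fip ((Wmᵀ * Wm) * Z) ((Wmᵀ * Wm) * Z) ≤ frob (Wmᵀ * Wm) * fip Z ((Wmᵀ * Wm) * Z) := by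
  set A := Wmᵀ * Wm with hA
  set Q := fip (A * Z) (A * Z) with hQ
  set P := fip Z (A * Z) with hP
  have hassoc : A * Z = Wmᵀ * (Wm * Z) := by rw [hA, Matrix.mul_assoc]
  have hPW : P = fip (Wm * Z) (Wm * Z) := by
    rw [hP, hassoc, fip_comm, fip_mul_adjoint]
  have hPnn : 0 ≤ P := by rw [hPW]; exact fip_self_nonneg _
  have hQnn : 0 ≤ Q := fip_self_nonneg _
  have hQ2 : Q = fip (Wm * Z) (Wm * (A * Z)) := by
    conv_lhs => rw [hQ, hassoc, fip_mul_adjoint, ← hassoc]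
  have hX : fip (Wm * (A * Z)) (Wm * (A * Z)) = fip (A * (A * Z)) (A * Z) := by
    rw [hA, Matrix.mul_assoc ((Wm)ᵀ) Wm (A * Z), ← fip_mul_adjoint]
  have hXle : fip (A * (A * Z)) (A * Z) ≤ frob A * Q := by
    calc fip (A * (A * Z)) (A * Z) ≤ frob (A * (A * Z)) * frob (A * Z) :=
          fip_le_frob_mul_frob _ _
      _ ≤ (frob A * frob (A * Z)) * frob (A * Z) := by
          apply mul_le_mul_of_nonneg_right (frob_mul_le _ _) (frob_nonneg _)
      _ = frob A * Q := by rw [mul_assoc, ← sq, frob_sq]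
  have hcs : Q ^ 2 ≤ P * (frob A * Q) := by
    calc Q ^ 2 = fip (Wm * Z) (Wm * (A * Z)) ^ 2 := by rw [hQ2]
      _ ≤ fip (Wm * Z) (Wm * Z) * fip (Wm * (A * Z)) (Wm * (A * Z)) := fip_sq_le _ _
      _ = P * fip (A * (A * Z)) (A * Z) := by rw [← hPW, hX]
      _ ≤ P * (frob A * Q) := mul_le_mul_of_nonneg_left hXle hPnn
  rcases eq_or_lt_of_le hQnn with h0 | h0
  · rw [← h0]; exact mul_nonneg (frob_nonneg _) hPnn
  · have : Q * Q ≤ (frob A * P) * Q := by nlinarith [hcs]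
    exact le_of_mul_le_mul_right this h0

lemma grad_step (Wm : Matrix m p ℝ) (Z : Matrix p n ℝ) (μ : ℝ) (hμ1 : 0 < μ)
    (hμ2 : μ ≤ 2 / frob (Wmᵀ * Wm)) :
    frob (Z - μ • (Wmᵀ * (Wm * Z))) ≤ frob Z := by
  have hassoc : Wmᵀ * (Wm * Z) = (Wmᵀ * Wm) * Z := (Matrix.mul_assoc _ _ _).symm
  set A := Wmᵀ * Wm with hA
  by_cases hA0 : A = 0
  · rw [hassoc, hA0, Matrix.zero_mul, smul_zero, sub_zero]
  · have hfA : 0 < frob A :=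
      lt_of_le_of_ne (frob_nonneg A) (fun h => hA0 (frob_eq_zero h.symm))
    have hμfA : μ * frob A ≤ 2 := by
      rw [le_div_iff₀ hfA] at hμ2; exact hμ2
    rw [hassoc]
    apply frob_mono
    have e : fip (Z - μ • (A * Z)) (Z - μ • (A * Z)) =
        fip Z Z - 2 * μ * fip Z (A * Z) + μ ^ 2 * fip (A * Z) (A * Z) := by
      rw [fip_sub_left, fip_sub_right, fip_sub_right, fip_smul_left, fip_smul_left,
        fip_smul_right, fip_smul_right, fip_comm (A * Z) Z]
      ring
    rw [e]
    have hk := key_bound Wm Z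
    rw [← hA] at hk
    have hPnn : 0 ≤ fip Z (A * Z) := by
      have : fip Z (A * Z) = fip (Wm * Z) (Wm * Z) := by
        rw [hA, Matrix.mul_assoc, fip_comm, fip_mul_adjoint]
      rw [this]; exact fip_self_nonneg _
    nlinarith [sq_nonneg μ, mul_nonneg hμ1.le hPnn, mul_nonneg (mul_nonneg hμ1.le hμ1.le) hPnn]

lemma grad_step_right (B : Matrix p n ℝ) (Z : Matrix m p ℝ) (lam : ℝ) (h1 : 0 < lam)
    (h2 : lam ≤ 2 / frob (Bᵀ * B)) :
    frob (Z - lam • ((Z * B) * Bᵀ)) ≤ frob Z := by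
  have h2' : lam ≤ 2 / frob ((Bᵀ)ᵀ * Bᵀ) := by
    rwa [Matrix.transpose_transpose, ← frob_aat]
  have key := grad_step Bᵀ Zᵀ lam h1 h2'
  rw [Matrix.transpose_transpose] at key
  have ht : (Z - lam • ((Z * B) * Bᵀ))ᵀ = Zᵀ - lam • (B * (Bᵀ * Zᵀ)) := by
    rw [Matrix.transpose_sub, Matrix.transpose_smul, Matrix.transpose_mul,
      Matrix.transpose_mul, Matrix.transpose_transpose]
  rw [← frob_transpose (Z - lam • ((Z * B) * Bᵀ)), ht, ← frob_transpose Z]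
  exact key

lemma km_step (a : ℝ) (ha : a ∈ Set.Icc (0:ℝ) 1) (x y : Matrix m n ℝ)
    (hxy : frob y ≤ frob x) :
    frob (a • x + (1 - a) • y) ^ 2 ≤ frob x ^ 2 - (a * (1 - a)) * frob (y - x) ^ 2 := by
  have e : fip (a • x + (1 - a) • y) (a • x + (1 - a) • y) =
      a * fip x x + (1 - a) * fip y y - a * (1 - a) * fip (x - y) (x - y) := by
    simp only [fip_add_left, fip_add_right, fip_sub_left, fip_sub_right,
      fip_smul_left, fip_smul_right, fip_comm y x]
    ring
  rw [frob_sq, e, frob_sq, frob_sq]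
  have hyx : fip y y ≤ fip x x := by
    rw [← frob_sq, ← frob_sq]
    exact pow_le_pow_left₀ (frob_nonneg y) hxy 2
  have hsym : fip (x - y) (x - y) = fip (y - x) (y - x) := by
    have : x - y = -(y - x) := by abel
    rw [this, fip_neg_left, fip_comm, fip_neg_left, fip_comm]; ring
  rw [hsym]
  nlinarith [ha.1, ha.2, fip_self_nonneg (y - x)]

end grad

lemma seq_lemma (a d γ : ℕ → ℝ) (m₀ : ℕ) (ha : ∀ n, 0 ≤ a n) (hd : ∀ n, 0 ≤ d n)
    (hγ0 : ∀ n, 0 ≤ γ n) (hstep : ∀ n, m₀ ≤ n → a (n + 1) ≤ a n - γ n * d n ^ 2)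
    (hγ : ∃ δ > (0:ℝ), ∀ᶠ n in atTop, δ ≤ γ n) :
    Tendsto d atTop (nhds 0) := by
  have hsum : ∀ K, ∑ k ∈ Finset.range K, γ (k + m₀) * d (k + m₀) ^ 2 ≤ a m₀ := by
    intro K
    have h : ∀ K, (∑ k ∈ Finset.range K, γ (k + m₀) * d (k + m₀) ^ 2) + a (K + m₀) ≤ a m₀ := by
      intro K
      induction K with
      | zero => simp
      | succ K ih =>
        rw [Finset.sum_range_succ]
        have hs := hstep (K + m₀) (Nat.le_add_left _ _)
        have : K + 1 + m₀ = K + m₀ + 1 := by omega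
        rw [this]
        linarith
    have := h K
    have hnn := ha (K + m₀)
    linarith
  have hsummable : Summable (fun k => γ (k + m₀) * d (k + m₀) ^ 2) :=
    summable_of_sum_range_le (fun k => mul_nonneg (hγ0 _) (sq_nonneg _)) hsum
  have h0 : Tendsto (fun k => γ (k + m₀) * d (k + m₀) ^ 2) atTop (nhds 0) :=
    hsummable.tendsto_atTop_zero
  have h0' : Tendsto (fun n => γ n * d n ^ 2) atTop (nhds 0) :=
    (tendsto_add_atTop_iff_nat m₀).mp h0
  obtain ⟨δ, hδ, hev⟩ := hγ
  have hd2 : Tendsto (fun n => d n ^ 2) atTop (nhds 0) := by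
    have h0'' : Tendsto (fun n => γ n * d n ^ 2 / δ) atTop (nhds 0) := by
      simpa using h0'.div_const δ
    refine squeeze_zero' (Eventually.of_forall fun n => sq_nonneg _)
      (hev.mono fun n hn => ?_) h0''
    rw [le_div_iff₀ hδ]
    calc d n ^ 2 * δ ≤ d n ^ 2 * γ n := mul_le_mul_of_nonneg_left hn (sq_nonneg _)
      _ = γ n * d n ^ 2 := mul_comm _ _
  have := hd2.sqrt
  simp only [Real.sqrt_zero] at this
  refine this.congr fun n => ?_
  rw [Real.sqrt_sq (hd n)]

lemma ev_delta (α : ℕ → ℝ) (hb : ∀ n, α n ∈ Set.Icc (0:ℝ) 1)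
    (h1 : 0 < atTop.liminf (fun n => α n)) (h2 : atTop.limsup (fun n => α n) < 1) :
    ∃ δ > (0:ℝ), ∀ᶠ n in atTop, δ ≤ α n * (1 - α n) := by
  set l := atTop.liminf (fun n => α n) with hl
  set u := atTop.limsup (fun n => α n) with hu
  have hbd1 : IsBoundedUnder (· ≥ ·) (atTop : Filter ℕ) (fun n => α n) :=
    isBoundedUnder_of ⟨0, fun n => (hb n).1⟩
  have hbd2 : IsBoundedUnder (· ≤ ·) (atTop : Filter ℕ) (fun n => α n) :=
    isBoundedUnder_of ⟨1, fun n => (hb n).2⟩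
  have he1 : ∀ᶠ n in atTop, l / 2 < α n :=
    eventually_lt_of_lt_liminf (by linarith) hbd1
  have he2 : ∀ᶠ n in atTop, α n < (u + 1) / 2 :=
    eventually_lt_of_limsup_lt (by linarith) hbd2
  refine ⟨(l / 2) * (1 - (u + 1) / 2), by nlinarith, ?_⟩
  filter_upwards [he1, he2] with n hn1 hn2
  have h3 : 1 - (u + 1) / 2 ≤ 1 - α n := by linarith
  have h4 : (0:ℝ) ≤ 1 - (u + 1) / 2 := by nlinarith
  calc (l / 2) * (1 - (u + 1) / 2) ≤ α n * (1 - (u + 1) / 2) :=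
        mul_le_mul_of_nonneg_right hn1.le h4
    _ ≤ α n * (1 - α n) := mul_le_mul_of_nonneg_left h3 (hb n).1

theorem stmt_14
    (M N R : ℕ) (hM : 0 < M) (hN : 0 < N) (hR : 0 < R)
    (V : Matrix (Fin M) (Fin N) ℝ)
    (W : ℕ → Matrix (Fin M) (Fin R) ℝ) (H : ℕ → Matrix (Fin R) (Fin N) ℝ)
    (α β μ lam : ℕ → ℝ)
    (T : ℕ → Matrix (Fin R) (Fin N) ℝ → Matrix (Fin R) (Fin N) ℝ)
    (S : ℕ → Matrix (Fin M) (Fin R) ℝ → Matrix (Fin M) (Fin R) ℝ)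
    (hW0 : matNonneg (W 0)) (hH0 : matNonneg (H 0))
    (hα : ∀ n, α n ∈ Set.Icc (0:ℝ) 1) (hβ : ∀ n, β n ∈ Set.Icc (0:ℝ) 1)
    (hμ : ∀ n, W n ≠ 0 → 0 < μ n ∧ μ n ≤ 2 / frob ((W n)ᵀ * W n))
    (hT : ∀ n, W n ≠ 0 → ∀ X, T n X = pplus (X - μ n • ((W n)ᵀ * (W n * X - V))))
    (hT0 : ∀ n, W n = 0 → ∀ X, T n X = X)
    (hHrec : ∀ n, H (n + 1) = α n • H n + (1 - α n) • T n (H n))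
    (hlam : ∀ n, H (n + 1) ≠ 0 → 0 < lam n ∧ lam n ≤ 2 / frob ((H (n + 1))ᵀ * H (n + 1)))
    (hS : ∀ n, H (n + 1) ≠ 0 → ∀ X, S n X = pplus (X - lam n • ((X * H (n + 1) - V) * (H (n + 1))ᵀ)))
    (hS0 : ∀ n, H (n + 1) = 0 → ∀ X, S n X = X)
    (hWrec : ∀ n, W (n + 1) = β n • W n + (1 - β n) • S n (W n))
    (hA1 : ∃ m₀ : ℕ,
      (∃ Wf : Matrix (Fin M) (Fin R) ℝ, ∀ n ≥ m₀, S n Wf = Wf) ∧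
      (∃ Hf : Matrix (Fin R) (Fin N) ℝ, ∀ n ≥ m₀, T n Hf = Hf))
    (hC1α : 0 < atTop.liminf (fun n => α n) ∧ atTop.limsup (fun n => α n) < 1)
    (hC1β : 0 < atTop.liminf (fun n => β n) ∧ atTop.limsup (fun n => β n) < 1)
    :
    Tendsto (fun n => frob (H (n + 1) - H n)) atTop (nhds 0) ∧
    Tendsto (fun n => frob (W (n + 1) - W n)) atTop (nhds 0) := by
  obtain ⟨m₀, ⟨Wf, hWf⟩, ⟨Hf, hHf⟩⟩ := hA1
  have hTne : ∀ n X Y, frob (T n X - T n Y) ≤ frob (X - Y) := by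
    intro n X Y
    by_cases hw : W n = 0
    · rw [hT0 n hw, hT0 n hw]
    · rw [hT n hw, hT n hw]
      refine le_trans (pplus_nonexpansive _ _) ?_
      have harg : (X - μ n • ((W n)ᵀ * (W n * X - V))) - (Y - μ n • ((W n)ᵀ * (W n * Y - V)))
          = (X - Y) - μ n • ((W n)ᵀ * (W n * (X - Y))) := by
        simp only [Matrix.mul_sub, smul_sub]
        abel
      rw [harg]
      exact grad_step _ _ _ (hμ n hw).1 (hμ n hw).2
  have hSne : ∀ n X Y, frob (S n X - S n Y) ≤ frob (X - Y) := by
    intro n X Y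
    by_cases hh : H (n + 1) = 0
    · rw [hS0 n hh, hS0 n hh]
    · rw [hS n hh, hS n hh]
      refine le_trans (pplus_nonexpansive _ _) ?_
      have harg : (X - lam n • ((X * H (n + 1) - V) * (H (n + 1))ᵀ))
            - (Y - lam n • ((Y * H (n + 1) - V) * (H (n + 1))ᵀ))
          = (X - Y) - lam n • (((X - Y) * H (n + 1)) * (H (n + 1))ᵀ) := by
        simp only [Matrix.sub_mul, smul_sub]
        abel
      rw [harg]
      exact grad_step_right _ _ _ (hlam n hh).1 (hlam n hh).2
  constructor
  · -- H part
    have hstep : ∀ n, m₀ ≤ n → frob (H (n + 1) - Hf) ^ 2 ≤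
        frob (H n - Hf) ^ 2 - (α n * (1 - α n)) * frob (T n (H n) - H n) ^ 2 := by
      intro n hn
      have h1 : α n • Hf + (1 - α n) • Hf = Hf := by
        rw [← add_smul]
        have : α n + (1 - α n) = 1 := by ring
        rw [this, one_smul]
      have hdecomp : H (n + 1) - Hf = α n • (H n - Hf) + (1 - α n) • (T n (H n) - Hf) := by
        have h2 : α n • (H n - Hf) + (1 - α n) • (T n (H n) - Hf)
            = α n • H n + (1 - α n) • T n (H n) - (α n • Hf + (1 - α n) • Hf) := by
          simp only [smul_sub]; abel
        rw [hHrec n, h2, h1]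
      have hne : frob (T n (H n) - Hf) ≤ frob (H n - Hf) := by
        calc frob (T n (H n) - Hf) = frob (T n (H n) - T n Hf) := by rw [hHf n hn]
          _ ≤ frob (H n - Hf) := hTne n _ _
      have hkm := km_step (α n) (hα n) (H n - Hf) (T n (H n) - Hf) hne
      have e2 : T n (H n) - Hf - (H n - Hf) = T n (H n) - H n := by abel
      rw [e2] at hkm
      rw [hdecomp]
      exact hkm
    have hdt : Tendsto (fun n => frob (T n (H n) - H n)) atTop (nhds 0) :=
      seq_lemma (fun n => frob (H n - Hf) ^ 2) (fun n => frob (T n (H n) - H n))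
        (fun n => α n * (1 - α n)) m₀
        (fun n => sq_nonneg _) (fun n => frob_nonneg _)
        (fun n => mul_nonneg (hα n).1 (by linarith [(hα n).2]))
        hstep (ev_delta α hα hC1α.1 hC1α.2)
    have heq : ∀ n, frob (H (n + 1) - H n) = (1 - α n) * frob (T n (H n) - H n) := by
      intro n
      have h3 : H (n + 1) - H n = (1 - α n) • (T n (H n) - H n) := by
        rw [hHrec n]
        simp only [smul_sub, sub_smul, one_smul]
        abel
      rw [h3, frob_smul, abs_of_nonneg (by linarith [(hα n).2])]
    refine squeeze_zero' (Eventually.of_forall fun n => frob_nonneg _)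
      (Eventually.of_forall fun n => ?_) hdt
    rw [heq n]
    exact mul_le_of_le_one_left (frob_nonneg _) (by linarith [(hα n).1])
  · -- W part
    have hstep : ∀ n, m₀ ≤ n → frob (W (n + 1) - Wf) ^ 2 ≤
        frob (W n - Wf) ^ 2 - (β n * (1 - β n)) * frob (S n (W n) - W n) ^ 2 := by
      intro n hn
      have h1 : β n • Wf + (1 - β n) • Wf = Wf := by
        rw [← add_smul]
        have : β n + (1 - β n) = 1 := by ring
        rw [this, one_smul]
      have hdecomp : W (n + 1) - Wf = β n • (W n - Wf) + (1 - β n) • (S n (W n) - Wf) := by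
        have h2 : β n • (W n - Wf) + (1 - β n) • (S n (W n) - Wf)
            = β n • W n + (1 - β n) • S n (W n) - (β n • Wf + (1 - β n) • Wf) := by
          simp only [smul_sub]; abel
        rw [hWrec n, h2, h1]
      have hne : frob (S n (W n) - Wf) ≤ frob (W n - Wf) := by
        calc frob (S n (W n) - Wf) = frob (S n (W n) - S n Wf) := by rw [hWf n hn]
          _ ≤ frob (W n - Wf) := hSne n _ _
      have hkm := km_step (β n) (hβ n) (W n - Wf) (S n (W n) - Wf) hne
      have e2 : S n (W n) - Wf - (W n - Wf) = S n (W n) - W n := by abel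
      rw [e2] at hkm
      rw [hdecomp]
      exact hkm
    have hdt : Tendsto (fun n => frob (S n (W n) - W n)) atTop (nhds 0) :=
      seq_lemma (fun n => frob (W n - Wf) ^ 2) (fun n => frob (S n (W n) - W n))
        (fun n => β n * (1 - β n)) m₀
        (fun n => sq_nonneg _) (fun n => frob_nonneg _)
        (fun n => mul_nonneg (hβ n).1 (by linarith [(hβ n).2]))
        hstep (ev_delta β hβ hC1β.1 hC1β.2)
    have heq : ∀ n, frob (W (n + 1) - W n) = (1 - β n) * frob (S n (W n) - W n) := by
      intro n
      have h3 : W (n + 1) - W n = (1 - β n) • (S n (W n) - W n) := by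
        rw [hWrec n]
        simp only [smul_sub, sub_smul, one_smul]
        abel
      rw [h3, frob_smul, abs_of_nonneg (by linarith [(hβ n).2])]
    refine squeeze_zero' (Eventually.of_forall fun n => frob_nonneg _)
      (Eventually.of_forall fun n => ?_) hdt
    rw [heq n]
    exact mul_le_of_le_one_left (frob_nonneg _) (by linarith [(hβ n).1])
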